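/- If there exists a bowtie of involutions, then there exists a nontrivial automorphism Φ of the Boolean algebra P(ω)/Fin satisfying Φ ∘ Φ = identity. -/

import Mathlib

open Set

/-- The first uncountable ordinal `ω₁`. -/
noncomputable def omega1 : Ordinal := (Cardinal.aleph 1).ord

/-- `A =* B` : the symmetric difference `(A \ B) ∪ (B \ A)` is finite. -/
def EqStar (A B : Set ℕ) : Prop := ((A \ B) ∪ (B \ A)).Finite

/-- `A ⊆* B` : `A \ B` is finite. -/
def SubStar (A B : Set ℕ) : Prop := (A \ B).Finite

/-- A bowtie of functions: a sequence `⟨f_α : α < ω₁⟩` where each `f_α` is a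
fixed-point-free permutation of a set `D_α ⊆ ℕ`, satisfying conditions
(i), (ii), (iii) of the definition.  (The functions are represented as total
functions on `ℕ`; only their behavior on `D_α` matters.) -/
structure BowtieFn where
  /-- the domains `D_α` -/
  D : Ordinal → Set ℕ
  /-- the functions `f_α` (total functions; only values on `D α` matter) -/
  f : Ordinal → ℕ → ℕ
  /-- each `f_α` is a permutation of `D_α` -/
  bijOn : ∀ α < omega1, Set.BijOn (f α) (D α) (D α)
  /-- each `f_α` is fixed-point-free on `D_α` -/
  fixedPointFree : ∀ α < omega1, ∀ x ∈ D α, f α x ≠ x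
  /-- (i) `D_α ⊆* D_β` for `α < β < ω₁` -/
  sub : ∀ α β, α < β → β < omega1 → SubStar (D α) (D β)
  /-- (i) `D_β \ D_α` is infinite for `α < β < ω₁` -/
  diff_infinite : ∀ α β, α < β → β < omega1 → (D β \ D α).Infinite
  /-- (ii) `f_α =* f_β ↾ D_α` for `α ≤ β < ω₁` -/
  coherent : ∀ α β, α ≤ β → β < omega1 → {x ∈ D α | f α x ≠ f β x}.Finite
  /-- (iii) every `A ⊆ ℕ` has a witness `δ_A < ω₁` -/
  guess : ∀ A : Set ℕ, ∃ δ, δ < omega1 ∧ ∀ α, δ ≤ α → α < omega1 →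
      EqStar (f α '' ((D α \ D δ) ∩ A)) ((D α \ D δ) ∩ A) ∧
      EqStar (f α '' ((D α \ D δ) \ A)) ((D α \ D δ) \ A)

/-- A bowtie of involutions: a bowtie of functions in which every `f_α` is an
involution of its domain `D_α`. -/
structure BowtieInv extends BowtieFn where
  /-- each `f_α` is an involution on `D_α` -/
  invol : ∀ α < omega1, ∀ x ∈ D α, f α (f α x) = x

/-- An automorphism of the Boolean algebra `P(ω)/Fin`, represented by a lifting
`Φ : Set ℕ → Set ℕ` acting on representatives: `Φ` is well defined, injective
and surjective modulo finite sets, and preserves the Boolean operations modulo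
finite sets. -/
structure PωFinAuto where
  /-- the action on representatives -/
  Φ : Set ℕ → Set ℕ
  /-- well-definedness on `=*`-classes -/
  congr : ∀ A B : Set ℕ, EqStar A B → EqStar (Φ A) (Φ B)
  /-- injectivity on `=*`-classes -/
  inj : ∀ A B : Set ℕ, EqStar (Φ A) (Φ B) → EqStar A B
  /-- surjectivity on `=*`-classes -/
  surj : ∀ B : Set ℕ, ∃ A : Set ℕ, EqStar (Φ A) B
  /-- preservation of unions -/
  map_union : ∀ A B : Set ℕ, EqStar (Φ (A ∪ B)) (Φ A ∪ Φ B)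
  /-- preservation of complements -/
  map_compl : ∀ A : Set ℕ, EqStar (Φ Aᶜ) (Φ A)ᶜ

/-- A map on representatives induces a *trivial* automorphism of `P(ω)/Fin` if
there is an almost permutation `h` of `ℕ` (an injection on a cofinite set `dom`
whose image is cofinite) with `Φ A =* h[A ∩ dom]` for all `A`. -/
def IsTrivial (Φ : Set ℕ → Set ℕ) : Prop :=
  ∃ (h : ℕ → ℕ) (dom : Set ℕ), (domᶜ : Set ℕ).Finite ∧
    ((h '' dom)ᶜ : Set ℕ).Finite ∧ Set.InjOn h dom ∧
    ∀ A : Set ℕ, EqStar (Φ A) (h '' (A ∩ dom))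



lemma eqStar_iff {A B : Set ℕ} : EqStar A B ↔ (A \ B).Finite ∧ (B \ A).Finite := by
  unfold EqStar; rw [Set.finite_union]

lemma EqStar.mk' {A B : Set ℕ} (h1 : (A \ B).Finite) (h2 : (B \ A).Finite) : EqStar A B :=
  eqStar_iff.2 ⟨h1, h2⟩

lemma EqStar.left {A B : Set ℕ} (h : EqStar A B) : (A \ B).Finite := (eqStar_iff.1 h).1
lemma EqStar.right {A B : Set ℕ} (h : EqStar A B) : (B \ A).Finite := (eqStar_iff.1 h).2

lemma eqStar_refl (A : Set ℕ) : EqStar A A := EqStar.mk' (by simp) (by simp)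

lemma EqStar.symm {A B : Set ℕ} (h : EqStar A B) : EqStar B A := EqStar.mk' h.right h.left

lemma EqStar.trans {A B C : Set ℕ} (h1 : EqStar A B) (h2 : EqStar B C) : EqStar A C := by
  refine EqStar.mk' (((h1.left.union h2.left).subset ?_)) ((h2.right.union h1.right).subset ?_) <;>
    · intro x hx; by_cases hB : x ∈ B <;> simp_all [Set.mem_diff]

lemma eqStar_of_eq {A B : Set ℕ} (h : A = B) : EqStar A B := h ▸ eqStar_refl A

lemma SubStar.trans {A B C : Set ℕ} (h1 : SubStar A B) (h2 : SubStar B C) : SubStar A C := by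
  refine (h1.union h2).subset ?_
  intro x hx; by_cases hB : x ∈ B <;> simp_all [Set.mem_diff]

lemma subStar_of_subset {A B : Set ℕ} (h : A ⊆ B) : SubStar A B := by
  have : A \ B = ∅ := by rwa [Set.diff_eq_empty]
  rw [SubStar, this]; exact Set.finite_empty

lemma EqStar.subStar {A B : Set ℕ} (h : EqStar A B) : SubStar A B := h.left
lemma EqStar.subStar' {A B : Set ℕ} (h : EqStar A B) : SubStar B A := h.right

lemma eqStar_empty_iff {A : Set ℕ} : EqStar A ∅ ↔ A.Finite := by
  constructor
  · intro h; simpa using h.left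
  · intro h; exact EqStar.mk' (h.subset (Set.diff_subset)) (by simp)

lemma EqStar.union {A B A' B' : Set ℕ} (h1 : EqStar A A') (h2 : EqStar B B') :
    EqStar (A ∪ B) (A' ∪ B') := by
  refine EqStar.mk' (((h1.left.union h2.left).subset ?_)) (((h1.right.union h2.right).subset ?_)) <;>
    · intro x hx; simp only [Set.mem_diff, Set.mem_union] at *; tauto

lemma EqStar.inter {A B A' B' : Set ℕ} (h1 : EqStar A A') (h2 : EqStar B B') :
    EqStar (A ∩ B) (A' ∩ B') := by
  refine EqStar.mk' (((h1.left.union h2.left).subset ?_)) (((h1.right.union h2.right).subset ?_)) <;>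
    · intro x hx; simp only [Set.mem_diff, Set.mem_inter_iff, Set.mem_union] at *; tauto

lemma EqStar.diff {A B A' B' : Set ℕ} (h1 : EqStar A A') (h2 : EqStar B B') :
    EqStar (A \ B) (A' \ B') := by
  refine EqStar.mk' (((h1.left.union h2.right).subset ?_)) (((h1.right.union h2.left).subset ?_)) <;>
    · intro x hx; simp only [Set.mem_diff, Set.mem_union] at *; tauto

lemma EqStar.compl {A B : Set ℕ} (h : EqStar A B) : EqStar Aᶜ Bᶜ := by
  refine EqStar.mk' (h.right.subset ?_) (h.left.subset ?_) <;>
    · intro x hx; simp only [Set.mem_diff, Set.mem_compl_iff] at *; tauto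

lemma image_diff_subset' (f : ℕ → ℕ) (X Y : Set ℕ) : f '' X \ f '' Y ⊆ f '' (X \ Y) := by
  rintro x ⟨⟨a, ha, rfl⟩, hnot⟩
  exact ⟨a, ⟨ha, fun haY => hnot ⟨a, haY, rfl⟩⟩, rfl⟩

lemma SubStar.image {X Y : Set ℕ} (h : SubStar X Y) (f : ℕ → ℕ) :
    SubStar (f '' X) (f '' Y) := (Set.Finite.image f h).subset (image_diff_subset' f X Y)

/-- If `X =* Y` and `f = g` on all but finitely many points of `X ∩ Y`,
then `f '' X =* g '' Y`. -/
lemma eqStar_image_of {X Y : Set ℕ} (f g : ℕ → ℕ) (hXY : EqStar X Y)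
    (hfg : {x | x ∈ X ∩ Y ∧ f x ≠ g x}.Finite) : EqStar (f '' X) (g '' Y) := by
  refine EqStar.mk' (((hXY.left.union hfg).image f).subset ?_)
    (((hXY.right.union hfg).image g).subset ?_)
  · rintro x ⟨⟨a, ha, rfl⟩, hnot⟩
    refine ⟨a, ?_, rfl⟩
    by_cases haY : a ∈ Y
    · right; exact ⟨⟨ha, haY⟩, fun he => hnot ⟨a, haY, he.symm⟩⟩
    · left; exact ⟨ha, haY⟩
  · rintro x ⟨⟨a, ha, rfl⟩, hnot⟩
    refine ⟨a, ?_, rfl⟩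
    by_cases haX : a ∈ X
    · right; exact ⟨⟨haX, ha⟩, fun he => hnot ⟨a, haX, he⟩⟩
    · left; exact ⟨ha, haX⟩

lemma exists_ne2 (a b : Fin 3) : ∃ i : Fin 3, i ≠ a ∧ i ≠ b := by
  fin_cases a <;> fin_cases b <;> decide

noncomputable def pick3 (a b : Fin 3) : Fin 3 := (exists_ne2 a b).choose
lemma pick3_ne_left (a b : Fin 3) : pick3 a b ≠ a := (exists_ne2 a b).choose_spec.1
lemma pick3_ne_right (a b : Fin 3) : pick3 a b ≠ b := (exists_ne2 a b).choose_spec.2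

open Classical in
noncomputable def mkcolor (f : ℕ → ℕ) (S : Set ℕ) : ℕ → Fin 3
  | n =>
    let a : Fin 3 := if h : ∃ m, m < n ∧ m ∈ S ∧ f m = n then mkcolor f S h.choose else 0
    let b : Fin 3 := if h : f n < n then mkcolor f S (f n) else 0
    pick3 a b
  termination_by n => n
  decreasing_by all_goals first | exact h.choose_spec.1 | exact h

lemma mkcolor_spec (f : ℕ → ℕ) (S : Set ℕ) (hinj : Set.InjOn f S) :
    ∀ x ∈ S, f x ≠ x → mkcolor f S (f x) ≠ mkcolor f S x := by
  intro x hxS hfx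
  rcases lt_or_gt_of_ne hfx with hlt | hgt
  · conv_rhs => rw [mkcolor.eq_def]
    simp only [dif_pos hlt]
    intro he
    exact pick3_ne_right _ _ he.symm
  · conv_lhs => rw [mkcolor.eq_def]
    have hex : ∃ m, m < f x ∧ m ∈ S ∧ f m = f x := ⟨x, hgt, hxS, rfl⟩
    simp only [dif_pos hex]
    have hc : hex.choose = x := hinj hex.choose_spec.2.1 hxS hex.choose_spec.2.2
    rw [hc]
    exact pick3_ne_left _ _
section Core
variable (T : BowtieInv)

noncomputable def gd (A : Set ℕ) : Ordinal := (T.guess A).choose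

lemma gd_lt (A : Set ℕ) : gd T A < omega1 := (T.guess A).choose_spec.1

lemma gd_spec (A : Set ℕ) {α : Ordinal} (h1 : gd T A ≤ α) (h2 : α < omega1) :
    EqStar (T.f α '' ((T.D α \ T.D (gd T A)) ∩ A)) ((T.D α \ T.D (gd T A)) ∩ A) :=
  ((T.guess A).choose_spec.2 α h1 h2).1

noncomputable def Phi (A : Set ℕ) : Set ℕ :=
  T.f (gd T A) '' (A ∩ T.D (gd T A)) ∪ (A \ T.D (gd T A))

lemma subD {δ α : Ordinal} (h : δ ≤ α) (hα : α < omega1) : SubStar (T.D δ) (T.D α) := by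
  rcases h.lt_or_eq with h' | h'
  · exact T.sub _ _ h' hα
  · rw [h']; exact subStar_of_subset subset_rfl

lemma phi_key (A : Set ℕ) {α : Ordinal} (h1 : gd T A ≤ α) (h2 : α < omega1) :
    EqStar (Phi T A) (T.f α '' (A ∩ T.D α) ∪ (A \ T.D α)) := by
  set δ := gd T A with hδ
  have eqA : A ∩ T.D α = (A ∩ T.D α ∩ T.D δ) ∪ ((T.D α \ T.D δ) ∩ A) := by
    ext x; simp only [Set.mem_inter_iff, Set.mem_union, Set.mem_diff]; tauto
  have hB : EqStar (T.f α '' (A ∩ T.D α ∩ T.D δ)) (T.f δ '' (A ∩ T.D δ)) := by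
    apply eqStar_image_of
    · refine EqStar.mk' ?_ ?_
      · have : (A ∩ T.D α ∩ T.D δ) \ (A ∩ T.D δ) = ∅ := by
          ext x; simp only [Set.mem_diff, Set.mem_inter_iff]; tauto
        rw [this]; exact Set.finite_empty
      · refine ((subD T h1 h2)).subset ?_
        intro x hx; simp only [Set.mem_diff, Set.mem_inter_iff] at *; tauto
    · refine (T.coherent δ α h1 h2).subset ?_
      rintro x ⟨⟨⟨-, hd⟩, -⟩, hne⟩
      exact ⟨hd, fun he => hne he.symm⟩
  have hC : EqStar (T.f α '' ((T.D α \ T.D δ) ∩ A)) ((T.D α \ T.D δ) ∩ A) :=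
    gd_spec T A h1 h2
  have hD : EqStar (((T.D α \ T.D δ) ∩ A) ∪ (A \ T.D α)) (A \ T.D δ) := by
    refine EqStar.mk' ((subD T h1 h2).subset ?_) ?_
    · intro x hx
      simp only [Set.mem_diff, Set.mem_union, Set.mem_inter_iff] at *; tauto
    · have : (A \ T.D δ) \ (((T.D α \ T.D δ) ∩ A) ∪ (A \ T.D α)) = ∅ := by
        ext x; simp only [Set.mem_diff, Set.mem_union, Set.mem_inter_iff]; tauto
      rw [this]; exact Set.finite_empty
  have step : EqStar (T.f α '' (A ∩ T.D α) ∪ (A \ T.D α))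
      (T.f δ '' (A ∩ T.D δ) ∪ (A \ T.D δ)) := by
    have e1 : T.f α '' (A ∩ T.D α) ∪ (A \ T.D α) =
        T.f α '' (A ∩ T.D α ∩ T.D δ) ∪ (T.f α '' ((T.D α \ T.D δ) ∩ A) ∪ (A \ T.D α)) := by
      nth_rewrite 1 [eqA]
      rw [Set.image_union, Set.union_assoc]
    rw [e1]
    refine EqStar.trans (EqStar.union (eqStar_refl _) (EqStar.union hC (eqStar_refl _))) ?_
    exact EqStar.trans (EqStar.union hB hD) (eqStar_refl _)
  exact step.symm
end Core
lemma omega1_isLimit : Order.IsSuccLimit omega1 :=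
  Cardinal.isSuccLimit_ord (Cardinal.aleph0_le_aleph 1)

lemma succ_lt_omega1 {a : Ordinal} (h : a < omega1) : a + 1 < omega1 := by
  rw [Ordinal.add_one_eq_succ]; exact omega1_isLimit.succ_lt h

lemma hfg_trivial (f : ℕ → ℕ) (X Y : Set ℕ) : {x | x ∈ X ∩ Y ∧ f x ≠ f x}.Finite :=
  Set.finite_empty.subset (by rintro x ⟨-, hne⟩; exact absurd rfl hne)

section Core2
variable (T : BowtieInv)

lemma phi_congr {A B : Set ℕ} (h : EqStar A B) : EqStar (Phi T A) (Phi T B) := by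
  set α := max (gd T A) (gd T B) with hα'
  have hα : α < omega1 := max_lt (gd_lt T A) (gd_lt T B)
  have kA := phi_key T A (le_max_left _ _) hα
  have kB := phi_key T B (le_max_right _ _) hα
  refine kA.trans (EqStar.trans ?_ kB.symm)
  exact EqStar.union (eqStar_image_of _ _ (h.inter (eqStar_refl _)) (hfg_trivial _ _ _))
    (h.diff (eqStar_refl _))

lemma phi_union (A B : Set ℕ) : EqStar (Phi T (A ∪ B)) (Phi T A ∪ Phi T B) := by
  set α := max (gd T (A ∪ B)) (max (gd T A) (gd T B)) with hα'
  have hα : α < omega1 := max_lt (gd_lt T _) (max_lt (gd_lt T A) (gd_lt T B))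
  have kAB := phi_key T (A ∪ B) (le_max_left _ _) hα
  have kA := phi_key T A (le_trans (le_max_left _ _) (le_max_right _ _)) hα
  have kB := phi_key T B (le_trans (le_max_right _ _) (le_max_right _ _)) hα
  refine kAB.trans (EqStar.trans (eqStar_of_eq ?_) ((kA.union kB).symm))
  rw [Set.union_inter_distrib_right, Set.image_union, Set.union_diff_distrib]
  ext x; simp only [Set.mem_union]; tauto

lemma phi_compl (A : Set ℕ) : EqStar (Phi T Aᶜ) (Phi T A)ᶜ := by
  set α := max (gd T A) (gd T Aᶜ) with hα'
  have hα : α < omega1 := max_lt (gd_lt T A) (gd_lt T Aᶜ)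
  have kA := phi_key T A (le_max_left _ _) hα
  have kAc := phi_key T Aᶜ (le_max_right _ _) hα
  have bij := T.bijOn α hα
  set P := T.f α '' (A ∩ T.D α) ∪ (A \ T.D α) with hP
  set Q := T.f α '' (Aᶜ ∩ T.D α) ∪ (Aᶜ \ T.D α) with hQ
  have hunion : P ∪ Q = Set.univ := by
    have hsplit : (A ∩ T.D α) ∪ (Aᶜ ∩ T.D α) = T.D α := by
      ext x; by_cases hx : x ∈ A <;> simp [hx]
    have himg : T.f α '' (A ∩ T.D α) ∪ T.f α '' (Aᶜ ∩ T.D α) = T.D α := by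
      rw [← Set.image_union, hsplit]; exact bij.image_eq
    apply Set.eq_univ_of_forall
    intro x
    by_cases hx : x ∈ T.D α
    · have : x ∈ T.f α '' (A ∩ T.D α) ∪ T.f α '' (Aᶜ ∩ T.D α) := by rw [himg]; exact hx
      rcases this with h | h
      · exact Or.inl (Or.inl h)
      · exact Or.inr (Or.inl h)
    · by_cases hA : x ∈ A
      · exact Or.inl (Or.inr ⟨hA, hx⟩)
      · exact Or.inr (Or.inr ⟨hA, hx⟩)
  have hdisj : P ∩ Q = ∅ := by
    ext x
    simp only [Set.mem_inter_iff, Set.mem_empty_iff_false, iff_false]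
    rintro ⟨hP1, hQ1⟩
    rcases hP1 with h1 | h1 <;> rcases hQ1 with h2 | h2
    · obtain ⟨a, ha, rfl⟩ := h1
      obtain ⟨b, hb, hba⟩ := h2
      have : b = a := bij.injOn hb.2 ha.2 hba
      subst this
      exact hb.1 ha.1
    · obtain ⟨a, ha, rfl⟩ := h1
      exact h2.2 (bij.mapsTo ha.2)
    · obtain ⟨b, hb, rfl⟩ := h2
      exact h1.2 (bij.mapsTo hb.2)
    · exact h2.1 h1.1
  have hQP : Q = Pᶜ := by
    ext x
    constructor
    · intro hxQ hxP
      have : x ∈ P ∩ Q := ⟨hxP, hxQ⟩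
      rw [hdisj] at this; exact this
    · intro hxP
      have : x ∈ P ∪ Q := hunion ▸ Set.mem_univ x
      rcases this with h | h
      · exact absurd h hxP
      · exact h
  exact kAc.trans ((eqStar_of_eq hQP).trans kA.compl.symm)

lemma phi_invol (A : Set ℕ) : EqStar (Phi T (Phi T A)) A := by
  set B := Phi T A with hB
  set α := max (gd T A) (gd T B) with hα'
  have hα : α < omega1 := max_lt (gd_lt T A) (gd_lt T B)
  have bij := T.bijOn α hα
  have kA := phi_key T A (le_max_left _ _) hα
  have kB := phi_key T B (le_max_right _ _) hα
  set P := T.f α '' (A ∩ T.D α) ∪ (A \ T.D α) with hP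
  have e1 : P ∩ T.D α = T.f α '' (A ∩ T.D α) := by
    ext x
    constructor
    · rintro ⟨h1 | h1, h2⟩
      · exact h1
      · exact absurd h2 h1.2
    · intro hx
      obtain ⟨a, ha, rfl⟩ := hx
      exact ⟨Or.inl ⟨a, ha, rfl⟩, bij.mapsTo ha.2⟩
  have e2 : P \ T.D α = A \ T.D α := by
    ext x
    constructor
    · rintro ⟨h1 | h1, h2⟩
      · exact absurd (h1.choose_spec.2 ▸ bij.mapsTo h1.choose_spec.1.2) h2
      · exact ⟨h1.1, h2⟩
    · intro hx; exact ⟨Or.inr hx, hx.2⟩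
  have e3 : T.f α '' (T.f α '' (A ∩ T.D α)) = A ∩ T.D α := by
    ext x
    constructor
    · rintro ⟨y, ⟨a, ha, rfl⟩, rfl⟩
      rw [T.invol α hα a ha.2]; exact ha
    · intro hx
      exact ⟨T.f α x, ⟨x, hx, rfl⟩, T.invol α hα x hx.2⟩
  have hBD : EqStar (B ∩ T.D α) (T.f α '' (A ∩ T.D α)) :=
    (kA.inter (eqStar_refl _)).trans (eqStar_of_eq e1)
  have h1 : EqStar (T.f α '' (B ∩ T.D α)) (A ∩ T.D α) :=
    (eqStar_image_of _ _ hBD (hfg_trivial _ _ _)).trans (eqStar_of_eq e3)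
  have h2 : EqStar (B \ T.D α) (A \ T.D α) :=
    (kA.diff (eqStar_refl _)).trans (eqStar_of_eq e2)
  exact kB.trans ((h1.union h2).trans (eqStar_of_eq (Set.inter_union_diff A (T.D α))))
end Core2
section Core3
variable (T : BowtieInv)

lemma fix_finite (h : ℕ → ℕ) (dom : Set ℕ)
    (htriv : ∀ A : Set ℕ, EqStar (Phi T A) (h '' (A ∩ dom)))
    {α : Ordinal} (hα : α < omega1) : {x | x ∈ T.D α ∩ dom ∧ h x = x}.Finite := by
  have bij := T.bijOn α hα
  set c := mkcolor (T.f α) (T.D α) with hc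
  have hcol := mkcolor_spec (T.f α) (T.D α) bij.injOn
  set Tset := {x | x ∈ T.D α ∩ dom ∧ h x = x} with hTset
  have key : ∀ j : Fin 3, (Tset ∩ c ⁻¹' {j}).Finite := by
    intro j
    set Tj := Tset ∩ c ⁻¹' {j} with hTj
    have hTjD : Tj ⊆ T.D α := fun x hx => hx.1.1.1
    have hdisjj : T.f α '' Tj ∩ Tj = ∅ := by
      ext x
      simp only [Set.mem_inter_iff, Set.mem_empty_iff_false, iff_false]
      rintro ⟨⟨a, ha, rfl⟩, hfa⟩
      have hne : c (T.f α a) ≠ c a := hcol a (hTjD ha) (T.fixedPointFree α hα a (hTjD ha))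
      apply hne
      rw [Set.eq_of_mem_singleton hfa.2, Set.eq_of_mem_singleton ha.2]
    have himid : h '' (Tj ∩ dom) = Tj := by
      ext x
      constructor
      · rintro ⟨a, ⟨haT, -⟩, rfl⟩
        rw [haT.1.2]; exact haT
      · intro hx
        exact ⟨x, ⟨hx, hx.1.1.2⟩, hx.1.2⟩
    set β := max (gd T Tj) α with hβ'
    have hβ : β < omega1 := max_lt (gd_lt T Tj) hα
    have kT := phi_key T Tj (le_max_left _ _) hβ
    have h1 : EqStar Tj (Phi T Tj) := by
      have h0 := htriv Tj
      rw [himid] at h0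
      exact h0.symm
    have h2 : EqStar (T.f β '' (Tj ∩ T.D β)) (T.f α '' Tj) := by
      apply eqStar_image_of
      · refine EqStar.mk' (subStar_of_subset Set.inter_subset_left) ?_
        refine (subD T (le_max_right _ _) hβ).subset ?_
        rintro x ⟨hxT, hn⟩
        exact ⟨hTjD hxT, fun hxβ => hn ⟨hxT, hxβ⟩⟩
      · refine (T.coherent α β (le_max_right _ _) hβ).subset ?_
        rintro x ⟨⟨⟨hxT, -⟩, -⟩, hne⟩
        exact ⟨hTjD hxT, fun he => hne he.symm⟩
    have h3 : EqStar (Tj \ T.D β) ∅ := by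
      refine eqStar_empty_iff.2 ((subD T (le_max_right _ _) hβ).subset ?_)
      rintro x ⟨hxT, hn⟩
      exact ⟨hTjD hxT, hn⟩
    have hchain : EqStar Tj (T.f α '' Tj) :=
      h1.trans (kT.trans ((h2.union h3).trans (eqStar_of_eq (Set.union_empty _))))
    have hsub : Tj ⊆ Tj \ T.f α '' Tj := by
      intro x hx
      refine ⟨hx, fun hin => ?_⟩
      have : x ∈ T.f α '' Tj ∩ Tj := ⟨hin, hx⟩
      rw [hdisjj] at this; exact this
    exact hchain.left.subset hsub
  have hTun : Tset = ⋃ j : Fin 3, (Tset ∩ c ⁻¹' {j}) := by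
    ext x
    simp only [Set.mem_iUnion]
    constructor
    · intro hx; exact ⟨c x, hx, rfl⟩
    · rintro ⟨j, hj, -⟩; exact hj
  rw [hTun]
  exact Set.finite_iUnion key

lemma phi_nontrivial : ¬ IsTrivial (Phi T) := by
  rintro ⟨h, dom, hdc, himgc, hinjh, htriv⟩
  set S := {x | x ∈ dom ∧ h x ≠ x} with hS
  have hinjS : Set.InjOn h S := hinjh.mono (fun x hx => hx.1)
  set c := mkcolor h S with hc
  have hcol := mkcolor_spec h S hinjS
  set A : Fin 3 → Set ℕ := fun i => S ∩ c ⁻¹' {i} with hA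
  set γ := max (gd T (A 0)) (max (gd T (A 1)) (gd T (A 2))) with hγ
  have hγlt : γ < omega1 := max_lt (gd_lt _ _) (max_lt (gd_lt _ _) (gd_lt _ _))
  have hgd : ∀ i, gd T (A i) ≤ γ := by
    intro i
    fin_cases i
    · exact le_max_left _ _
    · exact le_trans (le_max_left _ _) (le_max_right _ _)
    · exact le_trans (le_max_right _ _) (le_max_right _ _)
  set α := γ + 1 with hαdef
  have hαlt : α < omega1 := succ_lt_omega1 hγlt
  have hγα : γ < α := by
    rw [hαdef, Ordinal.add_one_eq_succ]; exact Order.lt_succ γ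
  have hfix := fix_finite T h dom htriv hαlt
  set W := ((T.D α \ T.D γ) \ domᶜ) \ {x | x ∈ T.D α ∩ dom ∧ h x = x} with hW
  have hWinf : W.Infinite :=
    (((T.diff_infinite γ α hγα hαlt).diff hdc).diff hfix)
  have hWsub : W ⊆ ⋃ i : Fin 3, (T.D α \ T.D γ) ∩ A i := by
    rintro x ⟨⟨hxD, hxdom'⟩, hxT⟩
    have hxdom : x ∈ dom := by
      by_contra hx; exact hxdom' hx
    have hhx : h x ≠ x := fun he => hxT ⟨⟨hxD.1, hxdom⟩, he⟩
    have hxS : x ∈ S := ⟨hxdom, hhx⟩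
    exact Set.mem_iUnion.2 ⟨c x, hxD, hxS, rfl⟩
  have hex : ∃ i, ((T.D α \ T.D γ) ∩ A i).Infinite := by
    by_contra hcon
    push_neg at hcon
    exact hWinf ((Set.finite_iUnion hcon).subset hWsub)
  obtain ⟨i, hXinf⟩ := hex
  set X := (T.D α \ T.D γ) ∩ A i with hX
  set g := gd T (A i) with hg
  have k1 := phi_key T (A i) (le_trans (hgd i) hγα.le) hαlt
  have g1 := gd_spec T (A i) (le_trans (hgd i) hγα.le) hαlt
  have s1 : SubStar X ((T.D α \ T.D g) ∩ A i) := by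
    refine (subD T (hgd i) hγlt).subset ?_
    rintro x ⟨⟨hxD, hxA⟩, hn⟩
    refine ⟨?_, hxD.2⟩
    by_contra hxg
    exact hn ⟨⟨hxD.1, hxg⟩, hxA⟩
  have s2 : SubStar ((T.D α \ T.D g) ∩ A i) (T.f α '' ((T.D α \ T.D g) ∩ A i)) :=
    g1.subStar'
  have s3 : SubStar (T.f α '' ((T.D α \ T.D g) ∩ A i)) (T.f α '' (A i ∩ T.D α)) :=
    subStar_of_subset (Set.image_mono (fun x hx => ⟨hx.2, hx.1.1⟩))
  have s4 : SubStar (T.f α '' (A i ∩ T.D α)) (Phi T (A i)) :=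
    SubStar.trans (subStar_of_subset Set.subset_union_left) k1.subStar'
  have s5 : SubStar (Phi T (A i)) (h '' (A i ∩ dom)) := (htriv (A i)).subStar
  have sX : SubStar X (h '' (A i ∩ dom)) :=
    ((((s1.trans s2).trans s3).trans s4).trans s5)
  have hdisj : h '' (A i ∩ dom) ∩ A i = ∅ := by
    ext x
    simp only [Set.mem_inter_iff, Set.mem_empty_iff_false, iff_false]
    rintro ⟨⟨a, ⟨haA, hadom⟩, rfl⟩, hxA⟩
    have hne : c (h a) ≠ c a := hcol a haA.1 haA.1.2
    apply hne
    rw [Set.eq_of_mem_singleton hxA.2, Set.eq_of_mem_singleton haA.2]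
  have hsub : X ⊆ X \ h '' (A i ∩ dom) := by
    intro x hx
    refine ⟨hx, fun hin => ?_⟩
    have : x ∈ h '' (A i ∩ dom) ∩ A i := ⟨hin, hx.2⟩
    rw [hdisj] at this; exact this
  exact hXinf (sX.subset hsub)
end Core3
/-- If there exists a bowtie of involutions, then there exists a
nontrivial automorphism `Φ` of `P(ω)/Fin` with `Φ ∘ Φ = id`. -/
theorem bowtie_of_involutions_implies_nontrivial_involution
    (h : Nonempty BowtieInv) :
    ∃ F : PωFinAuto, ¬ IsTrivial F.Φ ∧ ∀ A : Set ℕ, EqStar (F.Φ (F.Φ A)) A := by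
  obtain ⟨T⟩ := h
  refine ⟨⟨Phi T, fun A B hAB => phi_congr T hAB,
      fun A B hAB => (phi_invol T A).symm.trans ((phi_congr T hAB).trans (phi_invol T B)),
      fun B => ⟨Phi T B, phi_invol T B⟩,
      phi_union T, phi_compl T⟩, phi_nontrivial T, phi_invol T⟩
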